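/- Let h, V : ℝ → ℝ be differentiable, α_x > α ≥ 0, λ ≥ α_x, C, ρ > 0, μ ≥ 0, and δ₀ ≥ C·μ/(α_x·ρ). Suppose for all t ≥ 0: h'(t) ≥ -α·h(t) + δ₀ - (C/ρ)·V(t), V(t) ≥ 0, and V'(t) ≤ -λ·V(t) + μ. Define H(t) = (α_x - α)·h(t) + δ₀ - (C/ρ)·V(t). Then H'(t) ≥ -α·H(t) for all t ≥ 0; hence if H(0) ≥ 0 then H(t) ≥ 0 for all t ≥ 0. -/

import Mathlib

/-- Key differential inequality in the existence proof for predictive CBFs: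
with `δ₀ ≥ Cμ/(α_x ρ)` and `h' ≥ -α h + δ₀ - (C/ρ) V`, `V ≥ 0`,
`V' ≤ -λ V + μ`, the function `H(t) = (α_x - α) h(t) + δ₀ - (C/ρ) V(t)`
satisfies `H'(t) ≥ -α H(t)`; hence `H(0) ≥ 0` implies `H(t) ≥ 0` for `t ≥ 0`. -/
theorem stmt_3 (h V : ℝ → ℝ) (α αx lam C ρ mu δ₀ : ℝ)
    (hh : Differentiable ℝ h) (hV : Differentiable ℝ V)
    (hα : 0 ≤ α) (hαx : α < αx) (hlam : αx ≤ lam)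
    (hC : 0 < C) (hρ : 0 < ρ) (hmu : 0 ≤ mu)
    (hδ₀ : C * mu / (αx * ρ) ≤ δ₀)
    (hhineq : ∀ t : ℝ, 0 ≤ t → -α * h t + δ₀ - (C / ρ) * V t ≤ deriv h t)
    (hVpos : ∀ t : ℝ, 0 ≤ t → 0 ≤ V t)
    (hVineq : ∀ t : ℝ, 0 ≤ t → deriv V t ≤ -lam * V t + mu) :
    (∀ t : ℝ, 0 ≤ t →
      -α * ((αx - α) * h t + δ₀ - (C / ρ) * V t) ≤
        deriv (fun s => (αx - α) * h s + δ₀ - (C / ρ) * V s) t) ∧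
    (0 ≤ (αx - α) * h 0 + δ₀ - (C / ρ) * V 0 →
      ∀ t : ℝ, 0 ≤ t → 0 ≤ (αx - α) * h t + δ₀ - (C / ρ) * V t) := by
  set H : ℝ → ℝ := fun s => (αx - α) * h s + δ₀ - (C / ρ) * V s with hH
  have hαx0 : 0 < αx := lt_of_le_of_lt hα hαx
  have hHder : ∀ t : ℝ, HasDerivAt H ((αx - α) * deriv h t - (C / ρ) * deriv V t) t := by
    intro t
    exact (((hh t).hasDerivAt.const_mul _).add_const δ₀).sub
      ((hV t).hasDerivAt.const_mul _)
  have hd : ∀ t : ℝ, deriv H t = (αx - α) * deriv h t - (C / ρ) * deriv V t :=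
    fun t => (hHder t).deriv
  have hkey : C * mu / ρ ≤ αx * δ₀ := by
    rw [div_le_iff₀ (by positivity)] at hδ₀
    rw [div_le_iff₀ hρ]
    nlinarith
  have hmain : ∀ t : ℝ, 0 ≤ t → -α * H t ≤ deriv H t := by
    intro t ht
    rw [hd t]
    have h1 := hhineq t ht
    have h2 := hVineq t ht
    have h3 := hVpos t ht
    have hcρ : 0 < C / ρ := by positivity
    have e1 : (αx - α) * (-α * h t + δ₀ - (C / ρ) * V t) ≤ (αx - α) * deriv h t :=
      mul_le_mul_of_nonneg_left h1 (by linarith)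
    have e2 : (C / ρ) * deriv V t ≤ (C / ρ) * (-lam * V t + mu) :=
      mul_le_mul_of_nonneg_left h2 hcρ.le
    have e3 : (lam - αx) * ((C / ρ) * V t) ≥ 0 := by
      have : 0 ≤ (C / ρ) * V t := mul_nonneg hcρ.le h3
      nlinarith
    have e4 : (C / ρ) * mu = C * mu / ρ := by ring
    simp only [hH]
    nlinarith
  refine ⟨hmain, ?_⟩
  intro h0 t ht
  have hHcont : Continuous H := by
    exact (((hh.continuous).const_mul _).add continuous_const).sub (hV.continuous.const_mul _)
  set G : ℝ → ℝ := fun s => Real.exp (α * s) * H s with hG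
  have hGmono : MonotoneOn G (Set.Ici (0:ℝ)) := by
    apply monotoneOn_of_deriv_nonneg (convex_Ici 0)
    · exact (((Real.continuous_exp.comp (continuous_const.mul continuous_id)).mul hHcont)).continuousOn
    · intro s hs
      exact ((((Real.hasDerivAt_exp _).comp s ((hasDerivAt_id s).const_mul α)).mul (hHder s)).differentiableAt).differentiableWithinAt
    · intro s hs
      rw [interior_Ici] at hs
      have hsd : HasDerivAt G (α * Real.exp (α * s) * H s + Real.exp (α * s) * deriv H s) s := by
        have he : HasDerivAt (fun x => Real.exp (α * x)) (Real.exp (α * s) * (α * 1)) s :=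
          ((hasDerivAt_id s).const_mul α).exp
        have h2 := he.mul (hHder s)
        rw [← hd s] at h2
        rw [show α * Real.exp (α * s) * H s + Real.exp (α * s) * deriv H s = Real.exp (α * s) * (α * 1) * H s + Real.exp (α * s) * deriv H s by ring]
        exact h2
      rw [hsd.deriv]
      have hmt := hmain s (le_of_lt hs)
      have hexp : 0 < Real.exp (α * s) := Real.exp_pos _
      nlinarith
  have hG0 : (0:ℝ) ≤ G 0 := by
    simp only [hG, mul_zero, Real.exp_zero, one_mul]
    exact h0
  have hGt : G 0 ≤ G t := hGmono (Set.self_mem_Ici) ht ht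
  have hexp : 0 < Real.exp (α * t) := Real.exp_pos _
  have hfin : 0 ≤ Real.exp (α * t) * H t := le_trans hG0 hGt
  show 0 ≤ H t
  nlinarith
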